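/- For binary vectors g, g' ∈ {0,1}^q and a q×q binary matrix Γ of 𝔽₂-rank m, the bilinear form (g')ᵀ Γ g can be written modulo 2 as a sum of m expressions each of the form Sym(ĝ'_i, γ_{i1}ĝ_1, …, γ_{iq}ĝ_q) minus m expressions Sym(γ_{i1}ĝ_1, …, γ_{iq}ĝ_q), where ĝ = G⁻¹g, ĝ' = G⁻¹g' for an invertible binary matrix G, γ is the m×q full-row-rank reduction of Γ, and Sym denotes the sum of all pairwise products of its arguments. -/

import Mathlib

open Matrix

/-- `Sym(x₁,…,x_k) = ∑_{i<j} xᵢxⱼ` over `𝔽₂`. -/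
def sym2Form {k : ℕ} (v : Fin k → ZMod 2) : ZMod 2 :=
  ∑ p ∈ Finset.univ.filter (fun p : Fin k × Fin k => p.1 < p.2), v p.1 * v p.2

lemma sym2Form_eq {k : ℕ} (v : Fin k → ZMod 2) :
    sym2Form v = ∑ i, ∑ j, if i < j then v i * v j else 0 := by
  rw [sym2Form, Finset.sum_filter, Fintype.sum_prod_type]

lemma sym2Form_cons {k : ℕ} (a : ZMod 2) (v : Fin k → ZMod 2) :
    sym2Form (Fin.cons a v) = a * ∑ j, v j + sym2Form v := by
  rw [sym2Form_eq, sym2Form_eq, Fin.sum_univ_succ, Finset.mul_sum]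
  congr 1
  · rw [Fin.sum_univ_succ]; simp [Fin.succ_pos]
  · exact Finset.sum_congr rfl fun i _ => by rw [Fin.sum_univ_succ]; simp [Fin.succ_lt_succ_iff]

/-- The bilinear form `(g')ᵀ Γ g` over `𝔽₂` decomposes, after an invertible change
of basis `ĝ = G⁻¹g`, into `rank Γ` inter-site symmetric expressions minus
`rank Γ` on-site symmetric expressions built from the full-row-rank reduction
`γ` of `Γ`. -/
theorem bilinear_form_sym_decomposition (q : ℕ)
    (Γ : Matrix (Fin q) (Fin q) (ZMod 2)) (hle : Γ.rank ≤ q) :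
    ∃ (G Ginv : Matrix (Fin q) (Fin q) (ZMod 2))
      (γ : Matrix (Fin Γ.rank) (Fin q) (ZMod 2)),
      G * Ginv = 1 ∧ Ginv * G = 1 ∧
      (∀ i : Fin Γ.rank, ∀ j, (Gᵀ * Γ * G) (Fin.castLE hle i) j = γ i j) ∧
      (∀ i : Fin q, Γ.rank ≤ (i : ℕ) → ∀ j, (Gᵀ * Γ * G) i j = 0) ∧
      γ.rank = Γ.rank ∧
      ∀ g g' : Fin q → ZMod 2,
        (∑ j, ∑ k, g' j * Γ j k * g k) =
          ∑ i : Fin Γ.rank,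
            (sym2Form (Fin.cons (Ginv.mulVec g' (Fin.castLE hle i))
                (fun j => γ i j * Ginv.mulVec g j))
              - sym2Form (fun j => γ i j * Ginv.mulVec g j)) := by
  classical
  set m := Γ.rank with hm
  -- the left kernel
  set W : Submodule (ZMod 2) (Fin q → ZMod 2) := LinearMap.ker (Γᵀ.mulVecLin) with hW
  have hrankT : Γᵀ.rank = m := Γ.rank_transpose
  have hWrank : Module.finrank (ZMod 2) W = q - m := by
    have h1 : Γᵀ.rank + Module.finrank (ZMod 2) W
        = Module.finrank (ZMod 2) (Fin q → ZMod 2) :=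
      LinearMap.finrank_range_add_finrank_ker (Γᵀ.mulVecLin)
    rw [hrankT] at h1
    simp only [Module.finrank_pi, Fintype.card_fin] at h1
    omega
  obtain ⟨U, hUW⟩ := W.exists_isCompl
  have hUrank : Module.finrank (ZMod 2) U = m := by
    have := Submodule.finrank_add_eq_of_isCompl hUW.symm
    simp only [Module.finrank_pi, Fintype.card_fin, hWrank] at this
    omega
  let bU : Module.Basis (Fin m) (ZMod 2) U := Module.finBasisOfFinrankEq _ _ hUrank
  let bW : Module.Basis (Fin (q - m)) (ZMod 2) W := Module.finBasisOfFinrankEq _ _ hWrank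
  let e : (Fin m ⊕ Fin (q - m)) ≃ Fin q :=
    finSumFinEquiv.trans (finCongr (Nat.add_sub_cancel' hle))
  let b : Module.Basis (Fin q) (ZMod 2) (Fin q → ZMod 2) :=
    (((bU.prod bW).map (Submodule.prodEquivOfIsCompl U W hUW.symm)).reindex e)
  have hbW : ∀ i : Fin q, m ≤ (i : ℕ) → b i ∈ W := by
    intro i hi
    have : b i = ((bU.prod bW).map (Submodule.prodEquivOfIsCompl U W hUW.symm)) (e.symm i) := by
      simp [b]
    rw [this]
    rcases h : e.symm i with j | j
    · exfalso
      have : i = e (Sum.inl j) := by rw [← h]; simp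
      rw [this] at hi
      simp [e, finSumFinEquiv] at hi
      omega
    · simp [Module.Basis.prod_apply, Submodule.coe_prodEquivOfIsCompl']
  have hb_def : ∀ i : Fin q, b i ∈ (⊤ : Submodule (ZMod 2) (Fin q → ZMod 2)) := fun _ => trivial
  let P : Module.Basis (Fin q) (ZMod 2) (Fin q → ZMod 2) := Pi.basisFun _ _
  let G : Matrix (Fin q) (Fin q) (ZMod 2) := P.toMatrix ⇑b
  let Ginv : Matrix (Fin q) (Fin q) (ZMod 2) := b.toMatrix ⇑P
  have hGentry : ∀ i j, G i j = b j i := by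
    intro i j; simp [G, P, Module.Basis.toMatrix_apply]
  have hG1 : G * Ginv = 1 := Module.Basis.toMatrix_mul_toMatrix_flip _ _
  have hG2 : Ginv * G = 1 := Module.Basis.toMatrix_mul_toMatrix_flip _ _
  set B : Matrix (Fin q) (Fin q) (ZMod 2) := Gᵀ * Γ * G with hB
  -- rows ≥ m of B vanish
  have hrow0 : ∀ i : Fin q, m ≤ (i : ℕ) → ∀ j, B i j = 0 := by
    intro i hi j
    have hker : Γᵀ.mulVec (b i) = 0 := hbW i hi
    have hcol : ∀ l, ∑ k, b i k * Γ k l = 0 := by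
      intro l
      have := congrFun hker l
      simpa [Matrix.mulVec, dotProduct, Matrix.transpose_apply, mul_comm] using this
    simp only [hB, Matrix.mul_apply, Matrix.transpose_apply]
    calc ∑ l, (∑ k, G k i * Γ k l) * G l j
        = ∑ l, (∑ k, b i k * Γ k l) * G l j := by simp only [hGentry]
      _ = 0 := by simp [hcol]
  let γ : Matrix (Fin m) (Fin q) (ZMod 2) := B.submatrix (Fin.castLE hle) id
  have hγB : ∀ i j, B (Fin.castLE hle i) j = γ i j := fun i j => rfl
  -- rank facts
  have hGdet : IsUnit G.det := by
    apply Matrix.isUnit_det_of_right_inverse hG1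
  have hGTdet : IsUnit Gᵀ.det := by rwa [Matrix.det_transpose]
  have hBrank : B.rank = m := by
    rw [hB, Matrix.rank_mul_eq_left_of_isUnit_det _ _ hGdet,
      Matrix.rank_mul_eq_right_of_isUnit_det _ _ hGTdet]
  have hγrank : γ.rank = m := by
    have hspan : Submodule.span (ZMod 2) (Set.range γ) = Submodule.span (ZMod 2) (Set.range B) := by
      apply le_antisymm
      · rw [Submodule.span_le]
        rintro _ ⟨i, rfl⟩
        exact Submodule.subset_span ⟨Fin.castLE hle i, rfl⟩
      · rw [Submodule.span_le]
        rintro _ ⟨i, rfl⟩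
        by_cases h : (i : ℕ) < m
        · apply Submodule.subset_span
          exact ⟨⟨i, h⟩, by ext j; exact (hγB ⟨i, h⟩ j).symm⟩
        · have : B i = 0 := funext (hrow0 i (le_of_not_gt h))
          rw [this]; exact Submodule.zero_mem _
    rw [Matrix.rank_eq_finrank_span_row]
    rw [Matrix.rank_eq_finrank_span_row] at hBrank
    exact (congrArg (fun S : Submodule (ZMod 2) (Fin q → ZMod 2) => Module.finrank (ZMod 2) S) hspan).trans hBrank
  refine ⟨G, Ginv, γ, hG1, hG2, fun i j => hγB i j, hrow0, hγrank, ?_⟩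
  intro g g'
  set x : Fin q → ZMod 2 := Ginv.mulVec g with hx
  set y : Fin q → ZMod 2 := Ginv.mulVec g' with hy
  have key : ∀ i : Fin m,
      sym2Form (Fin.cons (y (Fin.castLE hle i)) (fun j => γ i j * x j))
        - sym2Form (fun j => γ i j * x j)
      = y (Fin.castLE hle i) * ∑ j, γ i j * x j := by
    intro i
    rw [sym2Form_cons]
    ring
  rw [Finset.sum_congr rfl fun i _ => key i]
  -- extend the sum to Fin q
  have hF0 : ∀ i : Fin q, m ≤ (i : ℕ) → y i * ∑ j, B i j * x j = 0 := by
    intro i hi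
    have : ∀ j, B i j = 0 := hrow0 i hi
    simp [this]
  have hsum : ∑ i : Fin m, y (Fin.castLE hle i) * ∑ j, γ i j * x j
      = ∑ i : Fin q, y i * ∑ j, B i j * x j := by
    calc ∑ i : Fin m, y (Fin.castLE hle i) * ∑ j, γ i j * x j
        = ∑ i ∈ Finset.univ.map (Fin.castLEEmb hle), y i * ∑ j, B i j * x j :=
          (Finset.sum_map Finset.univ (Fin.castLEEmb hle)
            (fun i => y i * ∑ j, B i j * x j)).symm
      _ = ∑ i : Fin q, y i * ∑ j, B i j * x j := ?_
    apply Finset.sum_subset (Finset.subset_univ _)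
    intro i _ hi
    apply hF0
    by_contra h
    exact hi (Finset.mem_map.mpr ⟨⟨i, by omega⟩, Finset.mem_univ _, by simp [Fin.castLEEmb]⟩)
  rw [hsum]
  -- now pure matrix algebra
  have : ∑ i : Fin q, y i * ∑ j, B i j * x j = y ⬝ᵥ (B *ᵥ x) := by
    simp [dotProduct, Matrix.mulVec]
  have hGx : G *ᵥ x = g := by rw [hx, Matrix.mulVec_mulVec, hG1, Matrix.one_mulVec]
  have hGy : G *ᵥ y = g' := by rw [hy, Matrix.mulVec_mulVec, hG1, Matrix.one_mulVec]
  rw [this, hB]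
  have hsplit : (Gᵀ * Γ * G) *ᵥ x = Gᵀ *ᵥ (Γ *ᵥ (G *ᵥ x)) := by
    simp only [Matrix.mul_assoc, ← Matrix.mulVec_mulVec]
  rw [hsplit, dotProduct_mulVec, Matrix.vecMul_transpose, hGy, hGx]
  simp [dotProduct, Matrix.mulVec, Finset.mul_sum, mul_assoc]
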